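/- If d+2 points in ℝ^d are in general position, P is one of them and α is a hyperplane strictly separating P from the others, then the projected points A′_i (intersections of segments P A_i with α, for the other d+1 points A_i) are d+1 points in the (d−1)-dimensional affine subspace α that are again in general position (every d of them affinely independent). -/
import Mathlib

lemma aux_proj {ι V : Type*} [AddCommGroup V] [Module ℝ V]
    (P : V) (B B' : ι → V) (t : ι → ℝ) (ht : ∀ i, t i ≠ 0)
    (hB' : ∀ i, B' i = (1 - t i) • P + t i • B i)
    (h : AffineIndependent ℝ (fun o : Option ι => o.elim P B)) :
    AffineIndependent ℝ B' := by
  classical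
  rw [affineIndependent_iff] at h ⊢
  intro u w hw0 hws i hi
  set W : Option ι → ℝ := fun o =>
    o.elim (-(∑ j ∈ u, w j * t j)) (fun j => if j ∈ u then w j * t j else 0) with hW
  have hnone : (none : Option ι) ∉ u.image some := by simp
  have hsum : ∑ o ∈ insert none (u.image some), W o = 0 := by
    rw [Finset.sum_insert hnone, Finset.sum_image (by simp)]
    simp [W, Finset.sum_ite_of_true]
  have hcomb : ∑ o ∈ insert none (u.image some), W o • (o.elim P B) = 0 := by
    rw [Finset.sum_insert hnone, Finset.sum_image (by simp)]
    have expand : ∑ j ∈ u, w j • B' j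
        = (∑ j ∈ u, w j * (1 - t j)) • P + ∑ j ∈ u, (w j * t j) • B j := by
      rw [Finset.sum_smul]
      rw [← Finset.sum_add_distrib]
      refine Finset.sum_congr rfl fun j _ => ?_
      rw [hB' j, smul_add, smul_smul, smul_smul]
    have hc : ∑ j ∈ u, w j * (1 - t j) = -(∑ j ∈ u, w j * t j) := by
      simp only [mul_sub, mul_one, Finset.sum_sub_distrib, hw0, zero_sub]
    rw [hws, hc] at expand
    have : ∑ j ∈ u, W (some j) • B j = ∑ j ∈ u, (w j * t j) • B j := by
      refine Finset.sum_congr rfl fun j hj => ?_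
      simp [W, hj]
    simp only [Option.elim]
    rw [this, hW]
    simp only [Option.elim]
    exact expand.symm
  have key := h (insert none (u.image some)) W hsum hcomb (some i)
    (Finset.mem_insert_of_mem (Finset.mem_image_of_mem _ hi))
  simp only [W, Option.elim, if_pos hi] at key
  rcases mul_eq_zero.mp key with h1 | h2
  · exact h1
  · exact absurd h2 (ht i)

theorem projected_points_general_position (d : ℕ) (hd : 1 ≤ d)
    (P : Fin d → ℝ) (A : Fin (d + 1) → (Fin d → ℝ))
    (hgen : ∀ s : Finset (Fin (d + 2)), s.card = d + 1 →
      AffineIndependent ℝ (fun i : s => (Fin.cons P A : Fin (d + 2) → (Fin d → ℝ)) i))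
    (f : (Fin d → ℝ) →ᵃ[ℝ] ℝ)
    (hP : f P < 0) (hA : ∀ i, 0 < f (A i))
    (A' : Fin (d + 1) → (Fin d → ℝ))
    (hA' : ∀ i, A' i ∈ segment ℝ P (A i) ∧ f (A' i) = 0) :
    ∀ s : Finset (Fin (d + 1)), s.card = d →
      AffineIndependent ℝ (fun i : s => A' i) := by
  -- extract segment parameters
  have hseg : ∀ i, ∃ b : ℝ, b ≠ 0 ∧ A' i = (1 - b) • P + b • A i := by
    intro i
    obtain ⟨hmem, hf0⟩ := hA' i
    obtain ⟨a, b, ha, hb, hab, hcomb⟩ := hmem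
    refine ⟨b, ?_, by rw [← hcomb]; congr 1; rw [← hab]; ring_nf⟩
    intro hb0
    have : A' i = P := by
      rw [← hcomb, hb0]
      simp
      rw [show a = 1 by linarith [hab, hb0]]
      simp
    rw [this] at hf0
    exact absurd hf0 (ne_of_lt hP)
  choose t ht heq using hseg
  intro s hs
  -- the (d+1)-element subset of Fin (d+2)
  set S : Finset (Fin (d + 2)) := insert 0 (s.image Fin.succ) with hS
  have h0 : (0 : Fin (d + 2)) ∉ s.image Fin.succ := by
    simp [Fin.succ_ne_zero]
  have hScard : S.card = d + 1 := by
    rw [hS, Finset.card_insert_of_notMem h0,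
      Finset.card_image_of_injective _ (Fin.succ_injective _), hs]
  have hindS := hgen S hScard
  -- embedding Option ↥s ↪ ↥S
  have hmem0 : (0 : Fin (d+2)) ∈ S := Finset.mem_insert_self _ _
  have hmemsucc : ∀ i : ↥s, (i : Fin (d+1)).succ ∈ S := by
    intro i
    exact Finset.mem_insert_of_mem (Finset.mem_image_of_mem _ i.2)
  have hinj : Function.Injective
      (fun o : Option ↥s => (o.elim ⟨0, hmem0⟩ (fun i => ⟨(i : Fin (d+1)).succ, hmemsucc i⟩) : ↥S)) := by
    rintro (_|a) (_|b) hab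
    · rfl
    · exact absurd (Subtype.ext_iff.mp hab).symm (Fin.succ_ne_zero _)
    · exact absurd (Subtype.ext_iff.mp hab) (Fin.succ_ne_zero _)
    · exact congrArg some (Subtype.ext (Fin.succ_injective _ (Subtype.ext_iff.mp hab)))
  have hcomp := hindS.comp_embedding ⟨_, hinj⟩
  have heqfun : ((fun i : S => (Fin.cons P A : Fin (d + 2) → (Fin d → ℝ)) i) ∘
      (fun o : Option ↥s => (o.elim ⟨0, hmem0⟩ (fun i => ⟨(i : Fin (d+1)).succ, hmemsucc i⟩) : ↥S)))
      = fun o : Option ↥s => o.elim P (fun i => A i) := by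
    funext o
    cases o with
    | none => simp
    | some i => simp
  rw [Function.Embedding.coeFn_mk, heqfun] at hcomp
  exact aux_proj P (fun i : ↥s => A (i : Fin (d+1))) (fun i : ↥s => A' (i : Fin (d+1)))
    (fun i => t (i : Fin (d+1))) (fun i => ht _) (fun i => heq _) hcomp
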